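/- Among all trees on n ≥ 2 vertices, the path P_n has the maximum Wiener index, namely (n-1)n(n+1)/6. -/

import Mathlib

open SimpleGraph Finset

section PMW
variable {V : Type} {G : SimpleGraph V} {T : SimpleGraph V}

set_option linter.unusedSectionVars false

lemma pg_exists_walk (d : ℕ) : ∀ {n : ℕ} (u v : Fin n), u.val + d = v.val →
    ∃ p : (SimpleGraph.pathGraph n).Walk u v, p.length = d := by
  induction d with
  | zero => intro n u v h; have : u = v := Fin.ext (by omega); subst this; exact ⟨.nil, rfl⟩
  | succ d ih =>
    intro n u v h
    have hlt : u.val + 1 < n := by omega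
    set u' : Fin n := ⟨u.val + 1, by omega⟩ with hu'
    have hadj : (pathGraph n).Adj u u' := pathGraph_adj.2 (Or.inl rfl)
    obtain ⟨q, hq⟩ := ih u' v (by simp [hu']; omega)
    exact ⟨.cons hadj q, by simp [hq]⟩

lemma pg_walk_le {n : ℕ} {u v : Fin n} (p : (SimpleGraph.pathGraph n).Walk u v) :
    Nat.dist u.val v.val ≤ p.length := by
  induction p with
  | nil => simp [Nat.dist]
  | cons h q ih =>
    rw [pathGraph_adj] at h
    simp only [Nat.dist] at *
    rw [SimpleGraph.Walk.length_cons]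
    omega

lemma pg_dist {n : ℕ} (u v : Fin n) :
    (SimpleGraph.pathGraph n).dist u v = Nat.dist u.val v.val := by
  refine le_antisymm ?_ ?_
  · rcases le_total u.val v.val with h | h
    · obtain ⟨p, hp⟩ := pg_exists_walk (v.val - u.val) u v (by omega)
      calc (pathGraph n).dist u v ≤ p.length := SimpleGraph.dist_le p
        _ = Nat.dist u.val v.val := by rw [hp]; simp [Nat.dist]; omega
    · obtain ⟨p, hp⟩ := pg_exists_walk (u.val - v.val) v u (by omega)
      rw [SimpleGraph.dist_comm]
      calc (pathGraph n).dist v u ≤ p.length := SimpleGraph.dist_le p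
        _ = Nat.dist u.val v.val := by rw [hp]; simp [Nat.dist]; omega
  · obtain ⟨p, hp⟩ := (SimpleGraph.pathGraph_preconnected n u v).exists_walk_length_eq_dist
    rw [← hp]; exact pg_walk_le p

lemma sum_nat_dist_single (n : ℕ) : 2 * ∑ i ∈ range n, Nat.dist i n = n * (n + 1) := by
  have h1 : ∑ i ∈ range n, Nat.dist i n = ∑ i ∈ range n, (n - i) := by
    refine Finset.sum_congr rfl fun i hi => ?_
    simp only [mem_range] at hi
    simp [Nat.dist]; omega
  have h2 : ∑ i ∈ range n, (n - i) = ∑ i ∈ range n, (i + 1) := by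
    rw [← Finset.sum_range_reflect]
    refine Finset.sum_congr rfl fun i hi => ?_
    simp only [mem_range] at hi; omega
  rw [h1, h2, Finset.sum_add_distrib]
  simp only [Finset.sum_const, card_range, smul_eq_mul, mul_one]
  have := Finset.sum_range_id_mul_two n
  cases n with
  | zero => simp
  | succ k => simp only [Nat.add_sub_cancel] at this; nlinarith [this]

lemma sum_nat_dist (n : ℕ) :
    3 * ∑ i ∈ range n, ∑ j ∈ range n, Nat.dist i j = (n - 1) * n * (n + 1) := by
  induction n with
  | zero => simp
  | succ m ih =>
    have hrow : ∀ i ∈ range m, ∑ j ∈ range (m+1), Nat.dist i j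
        = (∑ j ∈ range m, Nat.dist i j) + Nat.dist i m := by
      intro i _; rw [Finset.sum_range_succ]
    rw [Finset.sum_range_succ, Finset.sum_congr rfl hrow, Finset.sum_add_distrib,
      Finset.sum_range_succ]
    have hB := sum_nat_dist_single m
    have hBcomm : ∑ j ∈ range m, Nat.dist m j = ∑ j ∈ range m, Nat.dist j m := by
      exact Finset.sum_congr rfl fun j _ => Nat.dist_comm m j
    rw [hBcomm]
    simp only [Nat.dist_self, add_zero, Nat.add_sub_cancel]
    cases m with
    | zero => simp
    | succ k =>
      have hik : (k + 1 - 1) = k := by omega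
      rw [hik] at ih
      nlinarith [ih, hB]

lemma pg_del_walk_le {n : ℕ} {u v : Fin n} (huv : u.val + 1 = v.val) :
    ∀ {a b : Fin n}
      (_ : ((SimpleGraph.pathGraph n) \ SimpleGraph.fromEdgeSet {s(u, v)}).Walk a b),
      a.val ≤ u.val → b.val ≤ u.val := by
  intro a b p
  induction p with
  | nil => exact id
  | @cons a c b h q ih =>
    intro ha
    apply ih
    rw [SimpleGraph.sdiff_adj, SimpleGraph.fromEdgeSet_adj] at h
    obtain ⟨hadj, hne⟩ := h
    rw [pathGraph_adj] at hadj
    by_contra hc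
    have hac : a.val = u.val ∧ c.val = v.val := by omega
    have : a = u := Fin.ext hac.1
    have : c = v := Fin.ext hac.2
    apply hne
    constructor
    · subst_vars; simp
    · exact fun hab => (by omega : a.val ≠ c.val) (by rw [hab])

lemma pg_bridge {n : ℕ} {u v : Fin n} (huv : u.val + 1 = v.val) :
    (SimpleGraph.pathGraph n).IsBridge s(u, v) := by
  rw [SimpleGraph.isBridge_iff]
  rintro ⟨p⟩
  have := pg_del_walk_le huv p le_rfl
  omega

lemma pg_isTree {n : ℕ} (hn : 1 ≤ n) : (SimpleGraph.pathGraph n).IsTree := by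
  constructor
  · obtain ⟨m, rfl⟩ := Nat.exists_eq_add_of_le hn
    rw [Nat.add_comm]; exact SimpleGraph.pathGraph_connected m
  · rw [SimpleGraph.isAcyclic_iff_forall_adj_isBridge]
    intro a b hab
    rw [pathGraph_adj] at hab
    rcases hab with h | h
    · exact pg_bridge h
    · rw [Sym2.eq_swap]; exact pg_bridge h

lemma dist_getVert_le (hconn : G.Connected) {v u : V} (p : G.Walk v u) :
    ∀ i : ℕ, G.dist v (p.getVert i) ≤ i := by
  induction p with
  | nil => intro i; rw [SimpleGraph.Walk.getVert_of_length_le _ (by simp)]; simp [SimpleGraph.dist_self]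
  | @cons a c b h q ih =>
    intro i
    cases i with
    | zero => simp
    | succ i =>
      rw [SimpleGraph.Walk.getVert_cons_succ]
      calc G.dist a (q.getVert i) ≤ G.dist a c + G.dist c (q.getVert i) :=
            hconn.dist_triangle
        _ ≤ 1 + i := by
            have := ih i
            have h1 : G.dist a c ≤ 1 := by
              rw [← SimpleGraph.dist_eq_one_iff_adj] at h; omega
            omega
        _ = i + 1 := by omega

lemma dist_getVert_right (hconn : G.Connected) {v u : V} (p : G.Walk v u) :
    ∀ i : ℕ, G.dist (p.getVert i) u ≤ p.length - i := by
  induction p with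
  | nil => intro i; rw [SimpleGraph.Walk.getVert_of_length_le _ (by simp)]; simp
  | @cons a c b h q ih =>
    intro i
    cases i with
    | zero =>
      simpa using SimpleGraph.dist_le (SimpleGraph.Walk.cons h q)
    | succ i =>
      rw [SimpleGraph.Walk.getVert_cons_succ, SimpleGraph.Walk.length_cons]
      have := ih i
      omega

lemma card_ball [Fintype V] [DecidableEq V] (hconn : G.Connected) (v : V) {k : ℕ}
    (hk : k < Fintype.card V) :
    k + 1 ≤ (univ.filter fun u => G.dist v u ≤ k).card := by
  by_cases h : ∃ u, k < G.dist v u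
  · obtain ⟨u, hu⟩ := h
    obtain ⟨p, hp⟩ := (hconn u v).symm.exists_walk_length_eq_dist
    have hgv : ∀ i ≤ k, G.dist v (p.getVert i) = i := by
      intro i hi
      refine le_antisymm (dist_getVert_le hconn p i) ?_
      have h1 := dist_getVert_right hconn p i
      have h2 : G.dist v u ≤ G.dist v (p.getVert i) + G.dist (p.getVert i) u :=
        hconn.dist_triangle
      omega
    have : k + 1 = (range (k+1)).card := by simp
    rw [this]
    refine Finset.card_le_card_of_injOn (fun i => p.getVert i) ?_ ?_
    · intro i hi
      simp only [coe_range, Set.mem_Iio] at hi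
      simp only [coe_filter, mem_univ, true_and, Set.mem_setOf_eq]
      rw [hgv i (by omega)]; omega
    · intro i hi j hj hij
      simp only [coe_range, Set.mem_Iio] at hi hj
      have h1 := hgv i (by omega)
      have h2 := hgv j (by omega)
      simp only [] at hij
      rw [hij] at h1
      omega
  · push_neg at h
    have : (univ.filter fun u => G.dist v u ≤ k) = univ := by
      refine Finset.filter_true_of_mem fun u _ => h u
    rw [this]
    simpa using hk
lemma dist_lt_card [Fintype V] (hconn : G.Connected) (v u : V) :
    G.dist v u < Fintype.card V := by
  obtain ⟨p, hp, hl⟩ := hconn.exists_path_of_dist v u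
  rw [← hl]; exact hp.length_lt

lemma sum_dist_le [Fintype V] [DecidableEq V] (hconn : G.Connected) (v : V) :
    2 * ∑ u : V, G.dist v u ≤ Fintype.card V * (Fintype.card V - 1) := by
  set n := Fintype.card V with hn
  have hd : ∀ u, G.dist v u < n := dist_lt_card hconn v
  have hrewrite : ∀ u : V, G.dist v u = ∑ k ∈ range n, if k < G.dist v u then 1 else 0 := by
    intro u
    have hfil : (range n).filter (fun k => k < G.dist v u) = range (G.dist v u) := by
      ext k; simp only [mem_filter, mem_range]; exact ⟨fun h => h.2, fun h => ⟨h.trans (hd u), h⟩⟩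
    calc G.dist v u = ((range n).filter (fun k => k < G.dist v u)).card := by
          rw [hfil, card_range]
      _ = ∑ k ∈ range n, if k < G.dist v u then 1 else 0 := Finset.card_filter _ _
  calc 2 * ∑ u : V, G.dist v u
      = 2 * ∑ k ∈ range n, ∑ u : V, (if k < G.dist v u then 1 else 0) := by
        rw [← Finset.sum_comm]; simp_rw [← hrewrite]
    _ ≤ 2 * ∑ k ∈ range n, (n - (k + 1)) := by
        refine Nat.mul_le_mul_left 2 (Finset.sum_le_sum fun k hk => ?_)
        simp only [mem_range] at hk
        have hsplit := Finset.card_filter_add_card_filter_not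
          (s := (univ : Finset V)) (p := fun u => G.dist v u ≤ k)
        have hball := card_ball hconn v hk
        have hcount : (∑ u : V, if k < G.dist v u then 1 else 0)
            = (univ.filter fun u => ¬ (G.dist v u ≤ k)).card := by
          rw [Finset.card_filter]
          exact Finset.sum_congr rfl fun u _ => by simp only [not_le]
        rw [hcount]
        simp only [Finset.card_univ, ← hn] at hsplit
        omega
    _ ≤ n * (n - 1) := by
        have : ∑ k ∈ range n, (n - (k+1)) = ∑ k ∈ range n, k := by
          rw [← Finset.sum_range_reflect]
          exact Finset.sum_congr rfl fun i hi => by simp only [mem_range] at hi; omega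
        rw [this]
        have := Finset.sum_range_id_mul_two n
        omega

lemma induce_walk_of_avoid {s : Set V} {u x : V} (hu : u ∈ s) (hx : x ∈ s)
    (p : T.Walk u x) (hp : ∀ y ∈ p.support, y ∈ s) :
    ∃ q : (T.induce s).Walk ⟨u, hu⟩ ⟨x, hx⟩, q.length = p.length := by
  induction p with
  | nil => exact ⟨.nil, rfl⟩
  | @cons a b x h p' ih =>
    have hb : b ∈ s := hp b (by
      rw [SimpleGraph.Walk.support_cons]
      exact List.mem_cons.2 (Or.inr p'.start_mem_support))
    have hadj : (T.induce s).Adj ⟨a, hu⟩ ⟨b, hb⟩ := h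
    obtain ⟨q, hq⟩ := ih hb hx (fun y hy => hp y (by
      rw [SimpleGraph.Walk.support_cons]; exact List.mem_cons.2 (Or.inr hy)))
    exact ⟨.cons hadj q, by simp [hq]⟩

lemma dist_le_induce_dist {s : Set V} (a b : ↥s) :
    T.dist a.val b.val ≤ (T.induce s).dist a b ∨ ¬ (T.induce s).Reachable a b := by
  by_cases hreach : (T.induce s).Reachable a b
  · left
    obtain ⟨r, hr⟩ := hreach.exists_walk_length_eq_dist
    have := SimpleGraph.dist_le (r.map (SimpleGraph.Embedding.induce s).toHom)
    rwa [SimpleGraph.Walk.length_map, hr] at this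
  · right; exact hreach

section Leaf
variable [Fintype V] [DecidableEq V] 

lemma getVert_one_mem_support {u v : V} (p : T.Walk u v) (hp : ¬ p.Nil) :
    p.getVert 1 ∈ p.support := by
  rw [SimpleGraph.Walk.mem_support_iff_exists_getVert]
  exact ⟨1, rfl, by rw [SimpleGraph.Walk.not_nil_iff_lt_length] at hp; omega⟩

lemma exists_leaf (hT : T.IsTree) (h2 : 2 ≤ Fintype.card V) :
    ∃ w c : V, T.Adj w c ∧ ∀ a, T.Adj w a → a = c := by
  classical
  have hconn := hT.isConnected
  have hne : Nonempty V := Fintype.card_pos_iff.mp (by omega)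
  obtain ⟨v₀⟩ := hne
  obtain ⟨w, -, hw⟩ := Finset.exists_max_image (univ : Finset V) (T.dist v₀) ⟨v₀, mem_univ _⟩
  have hM : 1 ≤ T.dist v₀ w := by
    obtain ⟨u, hu⟩ := Fintype.exists_ne_of_one_lt_card (by omega) v₀
    have h1 : 0 < T.dist v₀ u := hconn.pos_dist_of_ne (Ne.symm hu)
    have := hw u (mem_univ _)
    omega
  have hwv : w ≠ v₀ := by
    intro h; rw [h, SimpleGraph.dist_self] at hM; omega
  obtain ⟨p, hp_path, hp_len⟩ := hconn.exists_path_of_dist w v₀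
  have hpnil : ¬ p.Nil := SimpleGraph.Walk.not_nil_of_ne hwv
  have hadj : T.Adj w (p.getVert 1) := SimpleGraph.Walk.adj_snd hpnil
  refine ⟨w, p.getVert 1, hadj, ?_⟩
  intro a ha
  obtain ⟨q, hq_path, hq_len⟩ := hconn.exists_path_of_dist a v₀
  have hwq : w ∉ q.support := by
    intro hmem
    have h1 : T.dist a w ≤ (q.takeUntil w hmem).length := SimpleGraph.dist_le _
    have h2 : T.dist w v₀ ≤ (q.dropUntil w hmem).length := SimpleGraph.dist_le _
    have h3 : (q.takeUntil w hmem).length + (q.dropUntil w hmem).length = q.length := by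
      rw [← SimpleGraph.Walk.length_append, SimpleGraph.Walk.take_spec]
    have h4 : 0 < T.dist a w := hconn.pos_dist_of_ne (Ne.symm (T.ne_of_adj ha))
    have h5 : q.length ≤ T.dist w v₀ := by
      rw [hq_len]
      calc T.dist a v₀ = T.dist v₀ a := SimpleGraph.dist_comm ..
        _ ≤ T.dist v₀ w := hw a (mem_univ _)
        _ = T.dist w v₀ := SimpleGraph.dist_comm ..
    omega
  have hq' : (SimpleGraph.Walk.cons ha q).IsPath := by
    rw [SimpleGraph.Walk.cons_isPath_iff]; exact ⟨hq_path, hwq⟩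
  have huniq := hT.IsAcyclic.path_unique ⟨p, hp_path⟩ ⟨_, hq'⟩
  have := congrArg (fun r : T.Path w v₀ => (r : T.Walk w v₀).getVert 1) huniq
  simp only [SimpleGraph.Walk.getVert_cons_succ, SimpleGraph.Walk.getVert_zero] at this
  exact this.symm

lemma exists_shortest_avoid (hT : T.IsTree) {w c : V} (hleaf : ∀ a, T.Adj w a → a = c)
    {u x : V} (hu : u ≠ w) (hx : x ≠ w) :
    ∃ p : T.Walk u x, p.length = T.dist u x ∧ w ∉ p.support := by
  obtain ⟨p, hp_path, hp_len⟩ := hT.isConnected.exists_path_of_dist u x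
  refine ⟨p, hp_len, ?_⟩
  intro hmem
  set q := p.takeUntil w hmem with hq
  set r := p.dropUntil w hmem with hr
  have hqnil : ¬ q.Nil := SimpleGraph.Walk.not_nil_of_ne hu
  have hrnil : ¬ r.Nil := SimpleGraph.Walk.not_nil_of_ne (Ne.symm hx)
  have hrevnil : ¬ q.reverse.Nil := SimpleGraph.Walk.not_nil_of_ne (Ne.symm hu)
  have hb : T.Adj w (r.getVert 1) := SimpleGraph.Walk.adj_snd hrnil
  have ha' : T.Adj w (q.reverse.getVert 1) := SimpleGraph.Walk.adj_snd hrevnil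
  have hac := hleaf _ ha'
  have hbc := hleaf _ hb
  have haq : q.reverse.getVert 1 ∈ q.support := by
    have h1 := getVert_one_mem_support q.reverse hrevnil
    rwa [SimpleGraph.Walk.support_reverse, List.mem_reverse] at h1
  have hbr : r.getVert 1 ∈ r.support.tail := by
    have h1 := getVert_one_mem_support r hrnil
    have h2 : r.getVert 1 ≠ w := Ne.symm (T.ne_of_adj hb)
    rw [SimpleGraph.Walk.support_eq_cons] at h1
    rcases List.mem_cons.mp h1 with h | h
    · exact absurd h h2
    · exact h
  have hnd := hp_path.support_nodup
  rw [← SimpleGraph.Walk.take_spec p hmem, SimpleGraph.Walk.support_append] at hnd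
  have hdisj := (List.nodup_append'.mp hnd).2.2
  exact hdisj (hac ▸ haq) (hbc ▸ hbr)

lemma induce_reach (hT : T.IsTree) {w c : V} (hleaf : ∀ a, T.Adj w a → a = c)
    (a b : ↥({x | x ≠ w} : Set V)) :
    ∃ q : (T.induce {x | x ≠ w}).Walk a b, q.length = T.dist a.val b.val := by
  obtain ⟨p, hlen, havoid⟩ := exists_shortest_avoid hT hleaf a.prop b.prop
  obtain ⟨q, hq⟩ := induce_walk_of_avoid a.prop b.prop p
    (fun y hy => by intro h; exact havoid (h ▸ hy))
  exact ⟨q, by rw [hq, hlen]⟩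

lemma induce_dist (hT : T.IsTree) {w c : V} (hleaf : ∀ a, T.Adj w a → a = c)
    (a b : ↥({x | x ≠ w} : Set V)) :
    (T.induce {x | x ≠ w}).dist a b = T.dist a.val b.val := by
  obtain ⟨q, hq⟩ := induce_reach hT hleaf a b
  refine le_antisymm (hq ▸ SimpleGraph.dist_le q) ?_
  rcases dist_le_induce_dist a b with h | h
  · exact h
  · exact absurd ⟨q⟩ h

lemma induce_isTree (hT : T.IsTree) {w c : V} (hleaf : ∀ a, T.Adj w a → a = c)
    (hne : Nonempty ↥({x | x ≠ w} : Set V)) :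
    (T.induce {x | x ≠ w}).IsTree := by
  constructor
  · exact ⟨fun a b => ⟨(induce_reach hT hleaf a b).choose⟩⟩
  · intro v cyc hcyc
    have hinj : Function.Injective ((SimpleGraph.Embedding.induce (G := T)
        ({x | x ≠ w} : Set V)).toHom : _ → V) := Subtype.val_injective
    exact hT.IsAcyclic _ (hcyc.map hinj)

end Leaf

end PMW


theorem treeB : ∀ (n : ℕ) (V : Type) [Fintype V] [DecidableEq V] (T : SimpleGraph V),
    Fintype.card V = n → T.IsTree →
    3 * ∑ u : V, ∑ x : V, T.dist u x ≤ (n - 1) * n * (n + 1) := by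
  intro n
  induction n with
  | zero =>
    intro V _ _ T hc hT
    haveI : IsEmpty V := Fintype.card_eq_zero_iff.mp hc
    simp
  | succ m ih =>
    intro V _ _ T hc hT
    by_cases hm : m = 0
    · subst hm
      haveI : Subsingleton V := Fintype.card_le_one_iff_subsingleton.mp (by omega)
      have h0 : ∀ u x : V, T.dist u x = 0 := fun u x => by
        rw [Subsingleton.elim x u]; exact SimpleGraph.dist_self
      simp [h0]
    · obtain ⟨w, c, hadj, hleaf⟩ := exists_leaf hT (by omega)
      set s : Set V := {x | x ≠ w} with hs
      haveI : DecidablePred (· ∈ s) := fun x => decidable_of_iff (x ≠ w) Iff.rfl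
      have hcards : Fintype.card ↥s = m := by
        have h1 : Fintype.card ↥s = Fintype.card {x // ¬ (x = w)} :=
          Fintype.card_congr (Equiv.subtypeEquivRight (fun x => Iff.rfl))
        rw [h1, Fintype.card_subtype_compl, Fintype.card_subtype_eq, hc]
        omega
      have hT' := induce_isTree hT hleaf
        (Fintype.card_pos_iff.mp (by rw [hcards]; omega))
      have IH := ih ↥s (T.induce s) hcards hT'
      have hdist : ∀ a b : ↥s, (T.induce s).dist a b = T.dist a.val b.val :=
        induce_dist hT hleaf
      simp only [hdist] at IH
      -- sum splitting
      have hsplitV : ∀ f : V → ℕ, ∑ u : V, f u = f w + ∑ u ∈ univ.erase w, f u :=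
        fun f => (Finset.add_sum_erase univ f (mem_univ w)).symm
      have hsub : ∀ f : V → ℕ, ∑ u ∈ univ.erase w, f u = ∑ a : ↥s, f a.val := by
        intro f
        exact Finset.sum_subtype (univ.erase w)
          (by intro x; simp [hs, Set.mem_setOf_eq]) f
      have key : (∑ u : V, ∑ x : V, T.dist u x)
          ≤ 2 * (∑ x : V, T.dist w x) + ∑ a : ↥s, ∑ b : ↥s, T.dist a.val b.val := by
        calc ∑ u : V, ∑ x : V, T.dist u x
            = (∑ x : V, T.dist w x) + ∑ u ∈ univ.erase w, ∑ x : V, T.dist u x :=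
              hsplitV _
          _ = (∑ x : V, T.dist w x) + ∑ u ∈ univ.erase w,
                (T.dist u w + ∑ x ∈ univ.erase w, T.dist u x) := by
              rw [Finset.sum_congr rfl fun u _ => hsplitV (T.dist u)]
          _ = (∑ x : V, T.dist w x) + ((∑ u ∈ univ.erase w, T.dist u w)
                + ∑ u ∈ univ.erase w, ∑ x ∈ univ.erase w, T.dist u x) := by
              rw [Finset.sum_add_distrib]
          _ ≤ (∑ x : V, T.dist w x) + ((∑ u : V, T.dist u w)
                + ∑ u ∈ univ.erase w, ∑ x ∈ univ.erase w, T.dist u x) := by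
              gcongr
              exact Finset.erase_subset w univ
          _ = (∑ x : V, T.dist w x) + ((∑ u : V, T.dist w u)
                + ∑ u ∈ univ.erase w, ∑ x ∈ univ.erase w, T.dist u x) := by
              rw [Finset.sum_congr rfl fun u _ => SimpleGraph.dist_comm ..]
          _ = 2 * (∑ x : V, T.dist w x) + ∑ a : ↥s, ∑ b : ↥s, T.dist a.val b.val := by
              rw [Finset.sum_congr rfl fun u (hu : u ∈ univ.erase w) => hsub (T.dist u),
                hsub (fun u => ∑ b : ↥s, T.dist u b.val)]
              ring
      have hFw : 2 * (∑ x : V, T.dist w x) ≤ (m + 1) * m := by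
        have := sum_dist_le hT.isConnected w
        rwa [hc, Nat.add_sub_cancel] at this
      obtain ⟨k, rfl⟩ : ∃ k, m = k + 1 := ⟨m - 1, by omega⟩
      simp only [Nat.add_sub_cancel] at IH ⊢
      nlinarith [key, hFw, IH]

/-- Among trees on `n ≥ 2` vertices, the path `P_n` has maximum Wiener index,
namely `(n-1)n(n+1)/6` (sums over ordered pairs equal twice the Wiener
index). -/
theorem path_max_wiener (n : ℕ) (hn : 2 ≤ n) :
    (SimpleGraph.pathGraph n).IsTree ∧
      ((∑ u : Fin n, ∑ v : Fin n, (SimpleGraph.pathGraph n).dist u v : ℕ) : ℚ) / 2 =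
        ((n : ℚ) - 1) * n * (n + 1) / 6 ∧
      ∀ T : SimpleGraph (Fin n), T.IsTree →
        ((∑ u : Fin n, ∑ v : Fin n, T.dist u v : ℕ) : ℚ) / 2 ≤
          ((n : ℚ) - 1) * n * (n + 1) / 6 := by
  have htree : (SimpleGraph.pathGraph n).IsTree := pg_isTree (by omega)
  refine ⟨htree, ?_, ?_⟩
  · have hpath_nat : 3 * (∑ u : Fin n, ∑ v : Fin n, (SimpleGraph.pathGraph n).dist u v)
        = (n - 1) * n * (n + 1) := by
      have h1 : ∀ u v : Fin n, (SimpleGraph.pathGraph n).dist u v = Nat.dist u.val v.val :=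
        pg_dist
      simp_rw [h1]
      have h2 : ∀ u : Fin n, (∑ v : Fin n, Nat.dist u.val v.val)
          = ∑ j ∈ Finset.range n, Nat.dist u.val j :=
        fun u => Fin.sum_univ_eq_sum_range _ n
      rw [Finset.sum_congr rfl fun u _ => h2 u,
        Fin.sum_univ_eq_sum_range (fun i => ∑ j ∈ Finset.range n, Nat.dist i j) n]
      exact sum_nat_dist n
    have hq := congrArg (Nat.cast : ℕ → ℚ) hpath_nat
    push_cast [Nat.cast_sub (show 1 ≤ n by omega)] at hq
    push_cast
    linarith
  · intro T hT
    have h := treeB n (Fin n) T (by simp) hT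
    have hq := (Nat.cast_le (α := ℚ)).mpr h
    push_cast [Nat.cast_sub (show 1 ≤ n by omega)] at hq
    push_cast
    linarith
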